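/- Let w = w_1 ⋯ w_{n²} be a square word of order n, let ŵ = w_2 ⋯ w_{n²}, and let ē = e_1 ∘ e_2 ∘ ⋯ ∘ e_{n−1} (applying e_{n−1} first). Then the word ē(ŵ)1, obtained by applying ē to ŵ and appending the letter 1, is again a square word of order n. -/

import Mathlib

/-! ### Words, crystal operators, and the major index -/

/-- The position (if any) of the rightmost letter `j` of `w` that is unpaired in the
bracket pairing of the letters `j+1` (opening brackets) and `j` (closing brackets) of `w`. -/
def unpairedPos (j : ℕ) (w : List ℕ) : Option ℕ :=
  (((List.range w.length).zip w).foldl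
    (fun (s : ℕ × Option ℕ) p =>
      if p.2 = j + 1 then (s.1 + 1, s.2)
      else if p.2 = j then (if 0 < s.1 then (s.1 - 1, s.2) else (0, some p.1))
      else s)
    (0, none)).2

/-- The crystal raising operator `e_j` on words: in the subword of `w` formed by the letters
`j` and `j+1`, pair each `j+1` (opening bracket) with a `j` (closing bracket); the unpaired
letters form a subword `j^r (j+1)^s`, and `e_j` changes this subword into
`j^(r-1) (j+1)^(s+1)`, i.e. it turns the last unpaired `j` into a `j+1`, leaving the rest
of `w` unchanged.  (If `r = 0`, we let `e_j` fix `w`.) -/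
def cryE (j : ℕ) (w : List ℕ) : List ℕ :=
  match unpairedPos j w with
  | none => w
  | some i => w.set i (j + 1)

/-- The composite operator `ē = e_1 ∘ e_2 ∘ ⋯ ∘ e_(n-1)` (applying `e_(n-1)` first). -/
def cryEbar (n : ℕ) (w : List ℕ) : List ℕ :=
  (List.range (n - 1)).reverse.foldl (fun v i => cryE (i + 1) v) w

/-- A square word of order `n`: a word with exactly `n` copies of each of the letters
`1, …, n` (and no other letters), such that every initial segment contains at least as
many letters `j+1` as letters `j`, for every `j`. -/
def IsSquareWord (n : ℕ) (w : List ℕ) : Prop :=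
  w.length = n * n ∧
  (∀ j, 1 ≤ j → j ≤ n → w.count j = n) ∧
  (∀ k j, 1 ≤ j → j < n → (w.take k).count j ≤ (w.take k).count (j + 1))

/-- The major index of a word `v = v_1 v_2 ⋯ v_l`: the sum of the descent positions,
i.e. of the positions `i` (`1 ≤ i ≤ l - 1`) such that `v_i > v_(i+1)`. -/
def majW (v : List ℕ) : ℕ :=
  ∑ i ∈ Finset.range v.length, if 0 < i ∧ v.getD i 0 < v.getD (i-1) 0 then i else 0

def upStep (j : ℕ) (s : ℕ × Option ℕ) (p : ℕ × ℕ) : ℕ × Option ℕ :=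
  if p.2 = j + 1 then (s.1 + 1, s.2)
  else if p.2 = j then (if 0 < s.1 then (s.1 - 1, s.2) else (0, some p.1))
  else s

lemma unpairedPos_eq (j : ℕ) (w : List ℕ) :
    unpairedPos j w = (((List.range w.length).zip w).foldl (upStep j) (0, none)).2 := rfl

lemma count_take_succ (v : List ℕ) (m k : ℕ) (hk : k < v.length) :
    (v.take (k+1)).count m = (v.take k).count m + (if v[k] = m then 1 else 0) := by
  rw [List.take_succ, List.getElem?_eq_getElem hk, List.count_append]
  simp only [Option.toList_some]
  congr 1
  simp [List.count_cons, beq_iff_eq]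

lemma unpairedPos_spec (j : ℕ) (v : List ℕ)
    (hb : ∀ k, (v.take k).count j ≤ (v.take k).count (j+1) + 1)
    (hL : v.count (j+1) + 1 = v.count j) :
    ∃ i, unpairedPos j v = some i ∧ ∃ hi : i < v.length, v[i] = j ∧
      (v.take (i+1)).count (j+1) + 1 = (v.take (i+1)).count j ∧
      ∀ k, k ≤ i → (v.take k).count j ≤ (v.take k).count (j+1) := by
  set z := (List.range v.length).zip v with hz
  have hzlen : z.length = v.length := by simp [hz]
  have hztake : ∀ k (hk : k < v.length), z.take (k+1) = z.take k ++ [(k, v[k]'hk)] := by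
    intro k hk
    rw [List.take_succ]
    congr 1
    have hk' : k < z.length := by omega
    rw [List.getElem?_eq_getElem hk']
    simp [hz, List.getElem_zip, List.getElem_range]
  have key : ∀ k, k ≤ v.length →
      ( ((z.take k).foldl (upStep j) (0, none)
          = ((v.take k).count (j+1) - (v.take k).count j, none))
        ∧ ∀ k', k' ≤ k → (v.take k').count j ≤ (v.take k').count (j+1) )
      ∨ (∃ i, ∃ hi : i < v.length, i < k ∧
          ((z.take k).foldl (upStep j) (0, none)
            = ((v.take k).count (j+1) + 1 - (v.take k).count j, some i))
          ∧ v[i] = j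
          ∧ (v.take (i+1)).count (j+1) + 1 = (v.take (i+1)).count j
          ∧ ∀ k', k' ≤ i → (v.take k').count j ≤ (v.take k').count (j+1)) := by
    intro k
    induction k with
    | zero =>
      intro _
      left
      constructor
      · simp
      · intro k' hk'
        interval_cases k' <;> simp
    | succ k ih =>
      intro hk1
      have hk : k < v.length := hk1
      have hstep := hztake k hk
      have hcj := count_take_succ v j k hk
      have hcj1 := count_take_succ v (j+1) k hk
      have hbk := hb k
      have hbk1 := hb (k+1)
      rw [hstep, List.foldl_append]
      rcases ih (le_of_lt hk) with ⟨hst, hall⟩ | ⟨i, hi, hik, hst, hvi, heq, hall⟩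
      · rw [hst]
        by_cases h1 : v[k] = j + 1
        · left
          have hne : ¬ (v[k] = j) := by omega
          have hBA : (v.take k).count j ≤ (v.take k).count (j+1) := hall k le_rfl
          constructor
          · simp only [List.foldl_cons, List.foldl_nil, upStep, h1, if_pos rfl]
            have : (v.take k).count (j+1) - (v.take k).count j + 1
                = (v.take (k+1)).count (j+1) - (v.take (k+1)).count j := by
              rw [hcj, hcj1]
              simp [h1, hne]
              omega
            rw [this]
            try simp
          · intro k' hk'
            rcases Nat.lt_or_ge k' (k+1) with h | h
            · exact hall k' (by omega)
            · have : k' = k + 1 := by omega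
              subst this
              rw [hcj, hcj1]
              simp [h1, hne]
              omega
        · by_cases h2 : v[k] = j
          · have hBA : (v.take k).count j ≤ (v.take k).count (j+1) := hall k le_rfl
            by_cases h3 : 0 < (v.take k).count (j+1) - (v.take k).count j
            · -- counter positive, decrement, stay left
              left
              constructor
              · simp only [List.foldl_cons, List.foldl_nil, upStep, h1, h2,
                  if_neg h1, if_pos rfl, if_pos h3]
                have : (v.take k).count (j+1) - (v.take k).count j - 1
                    = (v.take (k+1)).count (j+1) - (v.take (k+1)).count j := by
                  rw [hcj, hcj1]
                  simp [h1, h2]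
                  omega
                rw [this]
                try simp
              · intro k' hk'
                rcases Nat.lt_or_ge k' (k+1) with h | h
                · exact hall k' (by omega)
                · have : k' = k + 1 := by omega
                  subst this
                  rw [hcj, hcj1]
                  simp [h1, h2]
                  omega
            · -- counter zero: record position k
              right
              refine ⟨k, hk, by omega, ?_, h2, ?_, ?_⟩
              · simp only [List.foldl_cons, List.foldl_nil, upStep, h1, h2,
                  if_neg h1, if_pos rfl, if_neg h3]
                have : (0 : ℕ) = (v.take (k+1)).count (j+1) + 1 - (v.take (k+1)).count j := by
                  rw [hcj, hcj1]
                  simp [h1, h2]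
                  omega
                rw [this]
                try simp
              · rw [hcj, hcj1]
                simp [h1, h2]
                omega
              · exact hall
          · -- other letter
            left
            constructor
            · simp only [List.foldl_cons, List.foldl_nil, upStep, if_neg h1, if_neg h2]
              have : (v.take k).count (j+1) - (v.take k).count j
                  = (v.take (k+1)).count (j+1) - (v.take (k+1)).count j := by
                rw [hcj, hcj1]
                simp [h1, h2]
              rw [this]
              try simp
            · intro k' hk'
              rcases Nat.lt_or_ge k' (k+1) with h | h
              · exact hall k' (by omega)
              · have : k' = k + 1 := by omega
                subst this
                rw [hcj, hcj1]
                simp [h1, h2]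
                exact hall k le_rfl
      · -- already recorded
        rw [hst]
        right
        refine ⟨i, hi, by omega, ?_, hvi, heq, hall⟩
        by_cases h1 : v[k] = j + 1
        · have hne : ¬ (v[k] = j) := by omega
          simp only [List.foldl_cons, List.foldl_nil, upStep, h1, if_pos rfl]
          have : (v.take k).count (j+1) + 1 - (v.take k).count j + 1
              = (v.take (k+1)).count (j+1) + 1 - (v.take (k+1)).count j := by
            rw [hcj, hcj1]
            simp [h1, hne]
            omega
          rw [this]
          try simp
        · by_cases h2 : v[k] = j
          · have hpos : 0 < (v.take k).count (j+1) + 1 - (v.take k).count j := by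
              rw [hcj, hcj1] at hbk1
              simp [h1, h2] at hbk1
              omega
            simp only [List.foldl_cons, List.foldl_nil, upStep, if_neg h1, h2,
              if_pos rfl, if_pos hpos]
            have : (v.take k).count (j+1) + 1 - (v.take k).count j - 1
                = (v.take (k+1)).count (j+1) + 1 - (v.take (k+1)).count j := by
              rw [hcj, hcj1]
              simp [h1, h2]
              omega
            rw [this]
            try simp
          · simp only [List.foldl_cons, List.foldl_nil, upStep, if_neg h1, if_neg h2]
            have : (v.take k).count (j+1) + 1 - (v.take k).count j
                = (v.take (k+1)).count (j+1) + 1 - (v.take (k+1)).count j := by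
              rw [hcj, hcj1]
              simp [h1, h2]
            rw [this]
            try simp
  have hfin := key v.length le_rfl
  have hztot : z.take v.length = z := by
    rw [← hzlen, List.take_length]
  rw [hztot, List.take_length] at hfin
  rcases hfin with ⟨_, hall⟩ | ⟨i, hi, _, hst, hvi, heq, hall⟩
  · have := hall v.length le_rfl
    rw [List.take_length] at this
    omega
  · refine ⟨i, ?_, hi, hvi, heq, hall⟩
    rw [unpairedPos_eq, ← hz, hst]

lemma take_set' (l : List ℕ) (i a n : ℕ) : (l.set i a).take n = (l.take n).set i a := by
  apply List.ext_getElem?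
  intro m
  simp [List.getElem?_set, List.getElem?_take]
  split_ifs <;> simp_all <;> omega

lemma count_take_set (v : List ℕ) {i : ℕ} (hi : i < v.length) (c m k : ℕ) :
    ((v.set i c).take k).count m =
      if i < k then ((v.take k).count m - (if v[i] = m then 1 else 0))
        + (if c = m then 1 else 0)
      else (v.take k).count m := by
  rw [take_set']
  by_cases h : i < k
  · have hik : i < (v.take k).length := by simp [hi, h]
    rw [List.count_set hik]
    simp [h, List.getElem_take]
  · rw [List.set_eq_of_length_le]
    · simp [h]
    · simp; omega

lemma count_ge_one_of_take {v : List ℕ} {i k j : ℕ} (hi : i < v.length) (hvi : v[i] = j)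
    (hik : i < k) : 1 ≤ (v.take k).count j := by
  have hik' : i < (v.take k).length := by simp [hi, hik]
  have h1 : (v.take k)[i] ∈ v.take k := List.getElem_mem hik'
  rw [List.getElem_take] at h1
  rw [hvi] at h1
  exact List.count_pos_iff.mpr h1

/-- The invariant carried through the cascade of crystal operators: `d` is the currently
deficient letter, and `p` a position after which level `d` is strict. -/
def SqInv (n d p : ℕ) (v : List ℕ) : Prop :=
  1 ≤ d ∧ d ≤ n ∧ v.length = n * n - 1 ∧
  (∀ m, 1 ≤ m → m ≤ n → m ≠ d → v.count m = n) ∧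
  v.count d = n - 1 ∧
  (∀ k m, 1 ≤ m → m < n → m + 1 ≠ d → (v.take k).count m ≤ (v.take k).count (m+1)) ∧
  (2 ≤ d → (∀ k, (v.take k).count (d-1) ≤ (v.take k).count d + 1) ∧
    (∀ k, k ≤ p → (v.take k).count (d-1) ≤ (v.take k).count d)) ∧
  (d < n → ∀ k, p < k → (v.take k).count d + 1 ≤ (v.take k).count (d+1))

lemma inv_step {n d p : ℕ} {v : List ℕ} (hd : 2 ≤ d) (h : SqInv n d p v) :
    ∃ q, SqInv n (d-1) q (cryE (d-1) v) := by
  obtain ⟨hd1, hdn, hlen, hcnt, hcntd, hiii, hiv, hv⟩ := h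
  obtain ⟨hiv1, hiv2⟩ := hiv hd
  have hn1 : 1 ≤ n := by omega
  have hjd : d - 1 + 1 = d := by omega
  have hb : ∀ k, (v.take k).count (d-1) ≤ (v.take k).count (d-1+1) + 1 := by
    intro k; rw [hjd]; exact hiv1 k
  have hcv : v.count (d-1) = n := hcnt (d-1) (by omega) (by omega) (by omega)
  have hL : v.count (d-1+1) + 1 = v.count (d-1) := by
    rw [hjd, hcv, hcntd]; omega
  obtain ⟨i, hup, hi, hvi, heq, hall⟩ := unpairedPos_spec (d-1) v hb hL
  rw [hjd] at heq
  simp only [hjd] at hall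
  have hcry : cryE (d-1) v = v.set i d := by
    unfold cryE
    rw [hup, hjd]
  rw [hcry]
  set v' := v.set i d with hv'
  have hvlen : v'.length = v.length := by simp [hv']
  -- prefix count transformations
  have hctd1 : ∀ k, (v'.take k).count (d-1)
      = (v.take k).count (d-1) - (if i < k then 1 else 0) := by
    intro k
    rw [hv', count_take_set v hi, hvi]
    split_ifs <;> omega
  have hctd : ∀ k, (v'.take k).count d
      = (v.take k).count d + (if i < k then 1 else 0) := by
    intro k
    rw [hv', count_take_set v hi, hvi]
    split_ifs <;> omega
  have hcto : ∀ m k, m ≠ d - 1 → m ≠ d → (v'.take k).count m = (v.take k).count m := by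
    intro m k hm1 hm2
    rw [hv', count_take_set v hi, hvi]
    split_ifs <;> omega
  have hone : ∀ k, i < k → 1 ≤ (v.take k).count (d-1) := fun k hk =>
    count_ge_one_of_take hi hvi hk
  -- full count transformations
  have hfull : ∀ (u : List ℕ), u.length = v.length →
      ∀ m, u.count m = (u.take v.length).count m := by
    intro u hu m
    rw [← hu, List.take_length]
  have hfd1 : v'.count (d-1) = v.count (d-1) - 1 := by
    rw [hfull v' hvlen, hfull v rfl, hctd1]
    simp [hi]
  have hfd : v'.count d = v.count d + 1 := by
    rw [hfull v' hvlen, hfull v rfl, hctd]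
    simp [hi]
  have hfo : ∀ m, m ≠ d - 1 → m ≠ d → v'.count m = v.count m := by
    intro m hm1 hm2
    rw [hfull v' hvlen, hfull v rfl, hcto m v.length hm1 hm2]
  -- p ≤ i
  have hpi : p ≤ i := by
    by_contra hcon
    have h1 : i + 1 ≤ p := by omega
    have := hiv2 (i+1) h1
    omega
  refine ⟨i, by omega, by omega, by rw [hvlen, hlen], ?_, ?_, ?_, ?_, ?_⟩
  · -- counts for m ≠ d - 1
    intro m hm1 hm2 hm3
    by_cases hmd : m = d
    · subst hmd
      rw [hfd, hcntd]
      omega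
    · rw [hfo m (by omega) (by omega)]
      exact hcnt m hm1 hm2 hmd
  · -- count of d - 1 is n - 1
    rw [hfd1, hcv]
  · -- prefix inequalities for m + 1 ≠ d - 1
    intro k m hm1 hm2 hm3
    by_cases hmj : m = d - 1
    · subst hmj
      have h1 := hiv1 k
      rw [hjd, hctd1, hctd]
      by_cases hh : i < k
      · simp [hh]
        omega
      · have h2 := hall k (by omega)
        simp [hh]
        omega
    · by_cases hmd : m = d
      · have hdn' : d < n := by omega
        rw [hmd, hctd, hcto (d+1) k (by omega) (by omega)]
        by_cases hh : i < k
        · have h3 := hv hdn' k (by omega)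
          simp [hh]
          omega
        · simp [hh]
          exact hiii k d (by omega) hdn' (by omega)
      · rw [hcto m k (by omega) (by omega), hcto (m+1) k (by omega) (by omega)]
        exact hiii k m hm1 hm2 (by omega)
  · -- the (iv) clause at level d - 2
    intro hd2
    have h1 : 1 ≤ d - 2 := by omega
    have hd21 : d - 1 - 1 = d - 2 := by omega
    have hstep : ∀ k, (v'.take k).count (d-2) = (v.take k).count (d-2) :=
      fun k => hcto (d-2) k (by omega) (by omega)
    have hold : ∀ k, (v.take k).count (d-2) ≤ (v.take k).count (d-1) := by
      intro k
      have h2 := hiii k (d-2) h1 (by omega) (by omega)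
      have he : d - 2 + 1 = d - 1 := by omega
      rwa [he] at h2
    constructor
    · intro k
      rw [hd21, hstep k, hctd1]
      have h2 := hold k
      by_cases hh : i < k <;> simp [hh] <;> omega
    · intro k hk
      rw [hd21, hstep k, hctd1]
      have h2 := hold k
      have hh : ¬ i < k := by omega
      simp [hh]
      omega
  · -- the (v) clause: strictness of level d - 1 after i
    intro _ k hk
    rw [hjd, hctd1, hctd]
    have h1 := hiv1 k
    have h2 := hone k hk
    simp [hk]
    omega

lemma inv_fold (n : ℕ) : ∀ (m : ℕ) (v : List ℕ) (p : ℕ), SqInv n (m+1) p v →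
    ∃ q, SqInv n 1 q ((List.range m).reverse.foldl (fun v i => cryE (i+1) v) v) := by
  intro m
  induction m with
  | zero =>
    intro v p h
    exact ⟨p, by simpa using h⟩
  | succ m ih =>
    intro v p h
    rw [List.range_succ, List.reverse_append]
    simp only [List.reverse_singleton, List.singleton_append, List.foldl_cons]
    obtain ⟨q, hq⟩ := inv_step (show 2 ≤ m + 1 + 1 by omega) h
    exact ih (cryE (m+1) v) q (by simpa using hq)

lemma sum_count_eq_countP (n : ℕ) (w : List ℕ) :
    ∑ jj ∈ Finset.Icc 1 n, w.count jj = w.countP (fun x => decide (x ∈ Finset.Icc 1 n)) := by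
  induction w with
  | nil => simp
  | cons a t ih =>
    simp only [List.count_cons, List.countP_cons]
    rw [Finset.sum_add_distrib, ih]
    congr 1
    have : ∀ jj : ℕ, (if (a == jj) = true then (1:ℕ) else 0) = (if a = jj then 1 else 0) := by
      intro jj; simp [beq_iff_eq]
    simp only [this]
    rw [Finset.sum_ite_eq]
    by_cases hh : a ∈ Finset.Icc 1 n <;> simp [hh]

lemma mem_Icc_of_square {n : ℕ} {w : List ℕ} (hn : 0 < n) (hw : IsSquareWord n w) :
    ∀ x ∈ w, x ∈ Finset.Icc 1 n := by
  obtain ⟨hlen, hcnt, _⟩ := hw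
  have h1 : ∑ jj ∈ Finset.Icc 1 n, w.count jj = n * n := by
    rw [Finset.sum_congr rfl (fun jj hj => by
      rw [hcnt jj (Finset.mem_Icc.mp hj).1 (Finset.mem_Icc.mp hj).2])]
    simp [Nat.card_Icc]
  have h2 : w.countP (fun x => decide (x ∈ Finset.Icc 1 n)) = w.length := by
    rw [← sum_count_eq_countP, h1, hlen]
  have h3 := List.length_eq_countP_add_countP (fun x => decide (x ∈ Finset.Icc 1 n)) (l := w)
  have h4 : w.countP (fun a => decide ¬(decide (a ∈ Finset.Icc 1 n) = true)) = 0 := by omega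
  intro x hx
  have h5 := List.countP_eq_zero.mp h4 x hx
  rw [Finset.mem_Icc]
  simp at h5
  omega

lemma base_inv {n : ℕ} {w : List ℕ} (hn : 0 < n) (hw : IsSquareWord n w) :
    SqInv n n 0 (w.drop 1) := by
  have hnn : 1 ≤ n * n := Nat.one_le_iff_ne_zero.mpr (by positivity)
  have hmem := mem_Icc_of_square hn hw
  obtain ⟨hlen, hcnt, hpre⟩ := hw
  cases w with
  | nil => exfalso; simp at hlen; omega
  | cons a t =>
    have ha : a ∈ Finset.Icc 1 n := hmem a (List.mem_cons_self (a := a) (l := t))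
    have han : a = n := by
      rcases Finset.mem_Icc.mp ha with ⟨ha1, ha2⟩
      by_contra hcon
      have haln : a < n := by omega
      have := hpre 1 a ha1 haln
      simp only [List.take_succ_cons, List.take_zero] at this
      simp [List.count_cons, beq_iff_eq] at this
    subst han
    have hlent : t.length = a * a - 1 := by
      simp at hlen; omega
    simp only [List.drop_one, List.tail_cons]
    refine ⟨hn, le_rfl, hlent, ?_, ?_, ?_, ?_, ?_⟩
    · intro m hm1 hm2 hm3
      have := hcnt m hm1 hm2
      simp [List.count_cons, beq_iff_eq, Ne.symm hm3] at this
      omega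
    · have := hcnt a (by omega) le_rfl
      simp [List.count_cons] at this
      omega
    · intro k m hm1 hm2 hm3
      have := hpre (k+1) m hm1 hm2
      simp only [List.take_succ_cons] at this
      simp only [List.count_cons, beq_iff_eq] at this
      split_ifs at this <;> omega
    · intro hd2
      constructor
      · intro k
        have := hpre (k+1) (a-1) (by omega) (by omega)
        simp only [List.take_succ_cons] at this
        have he : a - 1 + 1 = a := by omega
        rw [he] at this
        simp [List.count_cons, beq_iff_eq, (by omega : ¬ (a = a - 1))] at this
        omega
      · intro k hk
        have hk0 : k = 0 := by omega
        subst hk0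
        simp
    · intro hcon
      omega

/-- If `w = w₁ ⋯ w_(n²)` is a square word of order `n`, then the word `ē(ŵ)1` — obtained
from `w` by deleting the first letter, applying `ē = e₁ ∘ e₂ ∘ ⋯ ∘ e_(n-1)` (with `e_(n-1)`
applied first), and appending the letter `1` — is again a square word of order `n`. -/
theorem ebar_of_hatted_square_word_append_one_is_square
    (n : ℕ) (hn : 0 < n) (w : List ℕ) (hw : IsSquareWord n w) :
    IsSquareWord n (cryEbar n (w.drop 1) ++ [1]) := by
  have hbase := base_inv hn hw
  have hb' : SqInv n (n - 1 + 1) 0 (w.drop 1) := by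
    have he : n - 1 + 1 = n := by omega
    rwa [he]
  obtain ⟨q, hq⟩ := inv_fold n (n-1) (w.drop 1) 0 hb'
  have hEbar : cryEbar n (w.drop 1)
      = (List.range (n-1)).reverse.foldl (fun v i => cryE (i+1) v) (w.drop 1) := rfl
  rw [hEbar]
  set v₁ := (List.range (n-1)).reverse.foldl (fun v i => cryE (i+1) v) (w.drop 1) with hv1
  obtain ⟨-, -, hlen, hcnt, hcnt1, hiii, -, -⟩ := hq
  have hnn : 1 ≤ n * n := Nat.one_le_iff_ne_zero.mpr (by positivity)
  refine ⟨?_, ?_, ?_⟩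
  · rw [List.length_append, hlen]
    simp
    omega
  · intro m hm1 hm2
    rw [List.count_append]
    by_cases hm : m = 1
    · subst hm
      rw [hcnt1]
      simp only [List.count_cons, List.count_nil, beq_iff_eq]
      split_ifs <;> omega
    · rw [hcnt m hm1 hm2 hm]
      simp only [List.count_cons, List.count_nil, beq_iff_eq]
      split_ifs <;> omega
  · intro k m hm1 hm2
    rcases le_or_gt k v₁.length with hk | hk
    · rw [List.take_append_of_le_length hk]
      exact hiii k m hm1 hm2 (by omega)
    · rw [List.take_of_length_le (by rw [List.length_append]; simp; omega)]
      rw [List.count_append, List.count_append]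
      by_cases hm : m = 1
      · subst hm
        have h2 : v₁.count 2 = n := hcnt 2 (by omega) (by omega) (by omega)
        rw [hcnt1, h2]
        simp only [List.count_cons, List.count_nil, beq_iff_eq]
        split_ifs <;> omega
      · have hmc : v₁.count m = n := hcnt m hm1 (by omega) hm
        have hm1c : v₁.count (m+1) = n := hcnt (m+1) (by omega) (by omega) (by omega)
        rw [hmc, hm1c]
        simp only [List.count_cons, List.count_nil, beq_iff_eq]
        split_ifs <;> omega
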